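/- arXiv:1311.2618 — 2 statements merged into one kernel-verified Lean document; each statement's English description precedes it below -/
import Mathlib

section
/- If H is a vertex-minor of G, then the linear rank-width of H is at most the linear rank-width of G. -/
set_option linter.unusedSectionVars false
set_option maxHeartbeats 1600000

/-- Local complementation at a vertex `v`. -/
def localComp {V : Type} (G : SimpleGraph V) (v : V) : SimpleGraph V where
  Adj x y := x ≠ y ∧ Xor' (G.Adj x y) (G.Adj v x ∧ G.Adj v y)
  symm := by
    refine ⟨?_⟩
    rintro x y ⟨hne, h⟩
    exact ⟨hne.symm, by rwa [G.adj_comm y x, and_comm]⟩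
  loopless := by refine ⟨?_⟩; rintro x ⟨hne, -⟩; exact hne rfl

/-- The cut-rank of `X`: the rank over GF(2) of the adjacency submatrix
`A(G)[X, V \\ X]`. -/
noncomputable def cutRank {V : Type} [Fintype V] [DecidableEq V]
    (G : SimpleGraph V) (X : Finset V) : ℕ := by
  classical
  exact Matrix.rank (Matrix.of fun (i : X) (j : (Xᶜ : Finset V)) =>
    if G.Adj (i : V) (j : V) then (1 : ZMod 2) else 0)

/-- A linear layout is an ordering of all vertices. -/
def IsLinearLayout {V : Type} (l : List V) : Prop := l.Nodup ∧ ∀ v : V, v ∈ l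

/-- The width of a linear layout: the maximum cut-rank of an initial segment. -/
noncomputable def layoutWidth {V : Type} [Fintype V] [DecidableEq V]
    (G : SimpleGraph V) (l : List V) : ℕ :=
  (Finset.range l.length).sup fun i => cutRank G (l.take (i+1)).toFinset

/-- The linear rank-width of a graph. -/
noncomputable def linRankWidth {V : Type} [Fintype V] [DecidableEq V]
    (G : SimpleGraph V) : ℕ :=
  sInf {k | ∃ l : List V, IsLinearLayout l ∧ layoutWidth G l = k}

/-- Deletion of the vertex `v`. -/
def deleteVertex {V : Type} (G : SimpleGraph V) (v : V) : SimpleGraph {u : V // u ≠ v} :=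
  G.induce {u : V | u ≠ v}

/-- `IsVertexMinor H G`: `H` is obtained from `G` by a sequence of local
complementations and vertex deletions (up to isomorphism). -/
inductive IsVertexMinor : {W : Type} → SimpleGraph W → {V : Type} → SimpleGraph V → Prop
  | of_iso {V W : Type} {G : SimpleGraph V} {H : SimpleGraph W}
      (e : Nonempty (H ≃g G)) : IsVertexMinor H G
  | localComp {V W : Type} {G : SimpleGraph V} {H : SimpleGraph W} (v : V)
      (h : IsVertexMinor H (localComp G v)) : IsVertexMinor H G
  | delete {V W : Type} {G : SimpleGraph V} {H : SimpleGraph W} (v : V)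
      (h : IsVertexMinor H (deleteVertex G v)) : IsVertexMinor H G

/-! ### Auxiliary rank lemmas -/

/-- Submatrix with arbitrary maps has smaller rank. -/
lemma rank_submatrix_le' {m n m' n' : Type} [Fintype m] [Fintype n] [Fintype m'] [Fintype n']
    [DecidableEq m] [DecidableEq n] {K : Type} [Field K] [DecidableEq K]
    (A : Matrix m n K) (f : m' → m) (g : n' → n) :
    (A.submatrix f g).rank ≤ A.rank := by
  classical
  have h : A.submatrix f g =
      (Matrix.of fun (i : m') (k : m) => if k = f i then (1:K) else 0) *
      (A * (Matrix.of fun (k : n) (j : n') => if k = g j then (1:K) else 0)) := by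
    ext i j
    simp [Matrix.mul_apply, Finset.sum_ite_eq', Finset.sum_ite_eq]
  rw [h]
  exact le_trans (Matrix.rank_mul_le_right _ _) (Matrix.rank_mul_le_left _ _)

lemma rank_submatrix_eq' {m n m' n' : Type} [Fintype m] [Fintype n] [Fintype m'] [Fintype n']
    [DecidableEq m] [DecidableEq n] [DecidableEq m'] [DecidableEq n']
    {K : Type} [Field K] [DecidableEq K]
    (A : Matrix m n K) (f : m' ≃ m) (g : n' ≃ n) :
    (A.submatrix f g).rank = A.rank := by
  refine le_antisymm (rank_submatrix_le' A f g) ?_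
  have := rank_submatrix_le' (A.submatrix f g) f.symm g.symm
  simpa using this

/-! ### cutRank under local complementation -/

open Classical in
lemma cutRank_localComp {V : Type} [Fintype V] [DecidableEq V]
    (G : SimpleGraph V) (v : V) (X : Finset V) :
    cutRank (localComp G v) X = cutRank G X := by
  classical
  set a : V → ZMod 2 := fun u => if G.Adj v u then 1 else 0 with ha
  have hav : a v = 0 := by simp [ha]
  set M : Matrix X (Xᶜ : Finset V) (ZMod 2) :=
    Matrix.of (fun (i : X) (j : (Xᶜ : Finset V)) =>
      if G.Adj (i : V) (j : V) then (1 : ZMod 2) else 0) with hM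
  have key : ∀ (i : X) (j : (Xᶜ : Finset V)),
      (if (localComp G v).Adj (i : V) (j : V) then (1 : ZMod 2) else 0)
      = M i j + a i * a j := by
    intro i j
    have hne : (i : V) ≠ (j : V) := by
      intro h
      have := j.2
      rw [← h] at this
      exact (Finset.mem_compl.mp this) i.2
    rw [show (if (localComp G v).Adj (i:V) (j:V) then (1:ZMod 2) else 0)
        = (if Xor' (G.Adj (i:V) (j:V)) (G.Adj v (i:V) ∧ G.Adj v (j:V)) then (1:ZMod 2) else 0)
      from if_congr ⟨fun h => h.2, fun h => ⟨hne, h⟩⟩ rfl rfl]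
    simp only [hM, ha, Matrix.of_apply]
    by_cases h1 : G.Adj (i:V) (j:V) <;> by_cases h2 : G.Adj v i <;> by_cases h3 : G.Adj v j <;>
      simp [hne, h1, h2, h3, Xor'] <;> decide
  by_cases hv : v ∈ X
  · -- row operation case
    set vX : (X : Finset V) := ⟨v, hv⟩
    set N : Matrix X X (ZMod 2) :=
      Matrix.of (fun i k => if k = vX then a i else 0) with hN
    have hNN : N * N = 0 := by
      ext i j
      simp [hN, Matrix.mul_apply, Finset.sum_ite_eq, hav, vX]
    have hE : (1 + N) * (1 + N) = 1 := by
      have h2 : (1 + N) * (1 + N) = 1 + (N + N) + N * N := by noncomm_ring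
      have h3 : N + N = 0 := by
        ext i j; simp [Matrix.add_apply, CharTwo.add_self_eq_zero]
      rw [h2, hNN, h3, add_zero, add_zero]
    have hunit : IsUnit ((1 + N : Matrix X X (ZMod 2))).det :=
      Matrix.isUnit_det_of_right_inverse hE
    have hmul : (1 + N) * M = Matrix.of (fun (i : X) (j : (Xᶜ : Finset V)) =>
        if (localComp G v).Adj (i : V) (j : V) then (1 : ZMod 2) else 0) := by
      ext i j
      simp only [Matrix.of_apply]
      rw [key i j]
      simp only [Matrix.add_mul, Matrix.one_mul, Matrix.add_apply]
      congr 1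
      have : (N * M) i j = a i * M vX j := by
        simp [hN, Matrix.mul_apply, Finset.sum_ite_eq]
      rw [this]
      have : M vX j = a j := by simp [hM, ha, vX]
      rw [this]
    show Matrix.rank _ = Matrix.rank M
    rw [← hmul, Matrix.rank_mul_eq_right_of_isUnit_det _ _ hunit]
  · -- column operation case
    have hv' : v ∈ (Xᶜ : Finset V) := Finset.mem_compl.mpr hv
    set vC : ((Xᶜ : Finset V) : Finset V) := (⟨v, hv'⟩ : (Xᶜ : Finset V))
    set N : Matrix (Xᶜ : Finset V) (Xᶜ : Finset V) (ZMod 2) :=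
      Matrix.of (fun k j => if k = vC then a j else 0) with hN
    have hNN : N * N = 0 := by
      ext i j
      simp [hN, Matrix.mul_apply, Finset.sum_ite_eq', hav, vC]
    have hE : (1 + N) * (1 + N) = 1 := by
      have h2 : (1 + N) * (1 + N) = 1 + (N + N) + N * N := by noncomm_ring
      have h3 : N + N = 0 := by
        ext i j; simp [Matrix.add_apply, CharTwo.add_self_eq_zero]
      rw [h2, hNN, h3, add_zero, add_zero]
    have hunit : IsUnit ((1 + N : Matrix (Xᶜ : Finset V) (Xᶜ : Finset V) (ZMod 2))).det :=
      Matrix.isUnit_det_of_right_inverse hE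
    have hmul : M * (1 + N) = Matrix.of (fun (i : X) (j : (Xᶜ : Finset V)) =>
        if (localComp G v).Adj (i : V) (j : V) then (1 : ZMod 2) else 0) := by
      ext i j
      simp only [Matrix.of_apply]
      rw [key i j]
      simp only [Matrix.mul_add, Matrix.mul_one, Matrix.add_apply]
      congr 1
      have h1 : (M * N) i j = M i vC * a j := by
        simp [hN, Matrix.mul_apply, Finset.sum_ite_eq']
      rw [h1]
      have : M i vC = a i := by
        simp only [hM, ha, Matrix.of_apply, vC]
        exact if_congr (G.adj_comm _ _) rfl rfl
      rw [this]
    show Matrix.rank _ = Matrix.rank M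
    rw [← hmul, Matrix.rank_mul_eq_left_of_isUnit_det _ _ hunit]

/-! ### cutRank under vertex deletion -/

lemma cutRank_delete_le {V : Type} [Fintype V] [DecidableEq V]
    (G : SimpleGraph V) (v : V) (X : Finset V) (X' : Finset {u : V // u ≠ v})
    (hX' : ∀ w : {u : V // u ≠ v}, w ∈ X' ↔ (w : V) ∈ X) :
    cutRank (deleteVertex G v) X' ≤ cutRank G X := by
  classical
  set M : Matrix X (Xᶜ : Finset V) (ZMod 2) :=
    Matrix.of (fun (i : X) (j : (Xᶜ : Finset V)) =>
      if G.Adj (i : V) (j : V) then (1 : ZMod 2) else 0) with hM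
  have hr : ∀ i : X', ((i : {u : V // u ≠ v}) : V) ∈ X := fun i => (hX' _).mp i.2
  have hc : ∀ j : (X'ᶜ : Finset {u : V // u ≠ v}),
      ((j : {u : V // u ≠ v}) : V) ∈ (Xᶜ : Finset V) := by
    intro j
    rw [Finset.mem_compl]
    intro hmem
    exact (Finset.mem_compl.mp j.2) ((hX' _).mpr hmem)
  set r : X' → X := fun i => ⟨((i : {u : V // u ≠ v}) : V), hr i⟩
  set c : (X'ᶜ : Finset {u : V // u ≠ v}) → (Xᶜ : Finset V) := fun j => ⟨_, hc j⟩
  have heq : (Matrix.of fun (i : X') (j : (X'ᶜ : Finset {u : V // u ≠ v})) =>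
      if (deleteVertex G v).Adj (i : {u : V // u ≠ v}) (j : {u : V // u ≠ v})
        then (1 : ZMod 2) else 0) = M.submatrix r c := by
    ext i j
    simp only [Matrix.of_apply, hM, Matrix.submatrix_apply]
    refine if_congr ?_ rfl rfl
    constructor
    · intro h; exact h
    · intro h; exact h
  show Matrix.rank _ ≤ Matrix.rank M
  rw [show (Matrix.of fun (i : X') (j : (X'ᶜ : Finset {u : V // u ≠ v})) =>
      if (deleteVertex G v).Adj (i : {u : V // u ≠ v}) (j : {u : V // u ≠ v})
        then (1 : ZMod 2) else 0) = M.submatrix r c from heq]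
  exact rank_submatrix_le' M r c

/-! ### cutRank under isomorphism -/

lemma cutRank_iso {V W : Type} [Fintype V] [DecidableEq V] [Fintype W] [DecidableEq W]
    {G : SimpleGraph V} {H : SimpleGraph W} (e : H ≃g G) (Y : Finset W) :
    cutRank H Y = cutRank G (Y.image e) := by
  classical
  have hmem : ∀ w : W, w ∈ Y ↔ e w ∈ Y.image e := by
    intro w
    constructor
    · intro h; exact Finset.mem_image_of_mem _ h
    · intro h
      obtain ⟨w', hw', hww⟩ := Finset.mem_image.mp h
      have : w' = w := e.toEquiv.injective hww
      rwa [this] at hw'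
  have hmemc : ∀ w : W, w ∈ (Yᶜ : Finset W) ↔ e w ∈ ((Y.image e)ᶜ : Finset V) := by
    intro w
    rw [Finset.mem_compl, Finset.mem_compl]
    exact not_congr (hmem w)
  set rEq : (Y : Finset W) ≃ ((Y.image e : Finset V) : Finset V) :=
    e.toEquiv.subtypeEquiv (fun w => hmem w)
  set cEq : ((Yᶜ : Finset W) : Finset W) ≃ (((Y.image e)ᶜ : Finset V) : Finset V) :=
    e.toEquiv.subtypeEquiv (fun w => hmemc w)
  have heq : (Matrix.of fun (i : Y) (j : (Yᶜ : Finset W)) =>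
      if H.Adj (i : W) (j : W) then (1 : ZMod 2) else 0)
      = (Matrix.of fun (i : (Y.image e : Finset V)) (j : (((Y.image e)ᶜ : Finset V))) =>
      if G.Adj (i : V) (j : V) then (1 : ZMod 2) else 0).submatrix rEq cEq := by
    ext i j
    simp only [Matrix.of_apply, Matrix.submatrix_apply]
    refine if_congr ?_ rfl rfl
    exact (e.map_adj_iff).symm
  show Matrix.rank _ = Matrix.rank _
  rw [show (Matrix.of fun (i : Y) (j : (Yᶜ : Finset W)) =>
      if H.Adj (i : W) (j : W) then (1 : ZMod 2) else 0) = _ from heq]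
  exact rank_submatrix_eq' _ rEq cEq

lemma filterMap_take_aux {α β : Type} (f : α → Option β) :
    ∀ (l : List α) (i : ℕ), i < (l.filterMap f).length →
      ∃ j, j < l.length ∧ (l.filterMap f).take (i+1) = (l.take (j+1)).filterMap f := by
  intro l
  induction l with
  | nil => intro i hi; simp at hi
  | cons a t ih =>
    intro i hi
    cases hfa : f a with
    | none =>
      rw [List.filterMap_cons_none hfa] at hi ⊢
      obtain ⟨j, hj, hEq⟩ := ih i hi
      refine ⟨j+1, by simpa using Nat.succ_lt_succ hj, ?_⟩
      rw [hEq, List.take_succ_cons, List.filterMap_cons_none hfa]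
    | some b =>
      rw [List.filterMap_cons_some hfa] at hi ⊢
      cases i with
      | zero =>
        exact ⟨0, by simp, by simp [List.filterMap_cons_some hfa]⟩
      | succ i' =>
        have hi' : i' < (t.filterMap f).length := by simpa using hi
        obtain ⟨j, hj, hEq⟩ := ih i' hi'
        refine ⟨j+1, by simpa using Nat.succ_lt_succ hj, ?_⟩
        rw [List.take_succ_cons, List.take_succ_cons, List.filterMap_cons_some hfa, hEq]

/-! ### Layout lemmas -/


lemma exists_opt_layout {V : Type} [Fintype V] [DecidableEq V] (G : SimpleGraph V) :
    ∃ l : List V, IsLinearLayout l ∧ layoutWidth G l = linRankWidth G := by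
  have hne : {k | ∃ l : List V, IsLinearLayout l ∧ layoutWidth G l = k}.Nonempty := by
    refine ⟨layoutWidth G Finset.univ.toList, Finset.univ.toList, ⟨Finset.nodup_toList _, ?_⟩, rfl⟩
    intro v; simp
  exact Nat.sInf_mem hne

lemma linRankWidth_le_layout {V : Type} [Fintype V] [DecidableEq V] (G : SimpleGraph V)
    (l : List V) (hl : IsLinearLayout l) : linRankWidth G ≤ layoutWidth G l :=
  Nat.sInf_le ⟨l, hl, rfl⟩

lemma linRankWidth_localComp_le {V : Type} [Fintype V] [DecidableEq V]
    (G : SimpleGraph V) (v : V) :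
    linRankWidth (localComp G v) ≤ linRankWidth G := by
  obtain ⟨l, hl, hw⟩ := exists_opt_layout G
  refine le_trans (linRankWidth_le_layout _ l hl) ?_
  rw [← hw]
  unfold layoutWidth
  exact le_of_eq (Finset.sup_congr rfl (fun i _ => cutRank_localComp G v _))

lemma linRankWidth_delete_le {V : Type} [Fintype V] [DecidableEq V]
    (G : SimpleGraph V) (v : V) :
    linRankWidth (deleteVertex G v) ≤ linRankWidth G := by
  classical
  obtain ⟨l, hl, hw⟩ := exists_opt_layout G
  set f : V → Option {u : V // u ≠ v} :=
    fun u => if h : u = v then none else some ⟨u, h⟩ with hf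
  have hfinj : ∀ (a a' : V) (b : {u : V // u ≠ v}), b ∈ f a → b ∈ f a' → a = a' := by
    intro a a' b hb hb'
    simp only [hf, Option.mem_def] at hb hb'
    split at hb
    · exact absurd hb (by simp)
    · split at hb'
      · exact absurd hb' (by simp)
      · rw [Option.some_inj] at hb hb'
        exact congrArg Subtype.val (hb.trans hb'.symm)
  have hfw : ∀ w : {u : V // u ≠ v}, f (w : V) = some w := by
    intro w
    simp only [hf]
    rw [dif_neg w.2]
  set l' : List {u : V // u ≠ v} := l.filterMap f with hl'
  have hlay : IsLinearLayout l' := by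
    constructor
    · exact List.Nodup.filterMap hfinj hl.1
    · intro w
      rw [hl', List.mem_filterMap]
      exact ⟨(w : V), hl.2 _, hfw w⟩
  refine le_trans (linRankWidth_le_layout _ l' hlay) ?_
  rw [← hw]
  unfold layoutWidth
  apply Finset.sup_le
  intro i hi
  rw [Finset.mem_range] at hi
  obtain ⟨j, hj, hEq⟩ := filterMap_take_aux f l i hi
  rw [hEq]
  refine le_trans (cutRank_delete_le G v (l.take (j+1)).toFinset _ ?_)
    (Finset.le_sup (f := fun i => cutRank G ((l.take (i+1)).toFinset)) (Finset.mem_range.mpr hj))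
  intro w
  rw [List.mem_toFinset, List.mem_toFinset, List.mem_filterMap]
  constructor
  · rintro ⟨a, ha, hfa⟩
    have : a = (w : V) := by
      simp only [hf] at hfa
      split at hfa
      · exact absurd hfa (by simp)
      · rw [Option.some_inj] at hfa
        exact congrArg Subtype.val hfa
    rwa [this] at ha
  · intro hmem
    exact ⟨(w : V), hmem, hfw w⟩

lemma linRankWidth_iso_le {V W : Type} [Fintype V] [DecidableEq V] [Fintype W] [DecidableEq W]
    {G : SimpleGraph V} {H : SimpleGraph W} (e : H ≃g G) :
    linRankWidth H ≤ linRankWidth G := by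
  classical
  obtain ⟨l, hl, hw⟩ := exists_opt_layout G
  set l' : List W := l.map e.symm with hl'
  have hlay : IsLinearLayout l' := by
    constructor
    · exact hl.1.map (fun a b hab => by
        have := congrArg e (show (e.symm a : W) = e.symm b from hab)
        simpa using e.toEquiv.symm.injective hab)
    · intro w
      rw [hl', List.mem_map]
      exact ⟨e w, hl.2 _, by simp⟩
  refine le_trans (linRankWidth_le_layout _ l' hlay) ?_
  rw [← hw]
  unfold layoutWidth
  rw [show l'.length = l.length from by simp [hl']]
  apply Finset.sup_le
  intro i hi
  have hfin : ((l'.take (i+1)).toFinset.image e) = (l.take (i+1)).toFinset := by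
    ext x
    simp only [Finset.mem_image, List.mem_toFinset, hl', ← List.map_take, List.mem_map]
    constructor
    · rintro ⟨y, ⟨z, hz, rfl⟩, rfl⟩
      simpa using hz
    · intro hx
      exact ⟨e.symm x, ⟨x, hx, rfl⟩, by simp⟩
  rw [cutRank_iso e, hfin]
  exact Finset.le_sup (f := fun i => cutRank G ((l.take (i+1)).toFinset)) hi

/-! ### Main theorem -/

lemma linRankWidth_le_of_isVertexMinor_aux :
    ∀ {W : Type} (H : SimpleGraph W) {V : Type} (G : SimpleGraph V),
      IsVertexMinor H G →
      ∀ [Fintype V] [DecidableEq V] [Fintype W] [DecidableEq W],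
        linRankWidth H ≤ linRankWidth G := by
  intro W H V G h
  induction h with
  | of_iso e =>
    intro _ _ _ _
    exact linRankWidth_iso_le e.some
  | localComp v h ih =>
    intro _ _ _ _
    exact le_trans ih (linRankWidth_localComp_le _ v)
  | delete v h ih =>
    intro _ _ _ _
    exact le_trans ih (linRankWidth_delete_le _ v)

theorem linRankWidth_le_of_isVertexMinor {V W : Type}
    [Fintype V] [DecidableEq V] [Fintype W] [DecidableEq W]
    (G : SimpleGraph V) (H : SimpleGraph W) (h : IsVertexMinor H G) :
    linRankWidth H ≤ linRankWidth G := by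
  exact linRankWidth_le_of_isVertexMinor_aux H G h
end

section
/- Every graph in Δ_k is a block graph in which every vertex has odd degree, every block is isomorphic to K_2 or K_3, and no vertex is simplicial of degree at least 2. -/
/-- The delta composition of three graphs: disjoint union plus a triangle
`v₁v₂v₃` with one vertex in each part. -/
def deltaComp {V₁ V₂ V₃ : Type} (G₁ : SimpleGraph V₁) (G₂ : SimpleGraph V₂)
    (G₃ : SimpleGraph V₃) (v₁ : V₁) (v₂ : V₂) (v₃ : V₃) :
    SimpleGraph (V₁ ⊕ V₂ ⊕ V₃) where
  Adj x y := match x, y with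
    | .inl a, .inl b => G₁.Adj a b
    | .inr (.inl a), .inr (.inl b) => G₂.Adj a b
    | .inr (.inr a), .inr (.inr b) => G₃.Adj a b
    | .inl a, .inr (.inl b) => a = v₁ ∧ b = v₂
    | .inr (.inl a), .inl b => a = v₂ ∧ b = v₁
    | .inl a, .inr (.inr b) => a = v₁ ∧ b = v₃
    | .inr (.inr a), .inl b => a = v₃ ∧ b = v₁
    | .inr (.inl a), .inr (.inr b) => a = v₂ ∧ b = v₃
    | .inr (.inr a), .inr (.inl b) => a = v₃ ∧ b = v₂
  symm := by
    refine ⟨?_⟩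
    rintro (a|a|a) (b|b|b) h
    · exact G₁.adj_symm h
    · exact ⟨h.2, h.1⟩
    · exact ⟨h.2, h.1⟩
    · exact ⟨h.2, h.1⟩
    · exact G₂.adj_symm h
    · exact ⟨h.2, h.1⟩
    · exact ⟨h.2, h.1⟩
    · exact ⟨h.2, h.1⟩
    · exact G₃.adj_symm h
  loopless := by refine ⟨?_⟩; rintro (a|a|a) h <;> exact (SimpleGraph.irrefl _) h

/-- `InDelta k G` means `G` belongs to the class `Δ_k` (up to isomorphism):
`Δ_0 = {K₂}` and `Δ_k` is the set of delta compositions of three graphs in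
`Δ_{k-1}`. -/
inductive InDelta : ℕ → {V : Type} → SimpleGraph V → Prop
  | base {V : Type} (G : SimpleGraph V)
      (e : Nonempty (G ≃g (⊤ : SimpleGraph (Fin 2)))) : InDelta 0 G
  | comp {k : ℕ} {V₁ V₂ V₃ V : Type} {G₁ : SimpleGraph V₁} {G₂ : SimpleGraph V₂}
      {G₃ : SimpleGraph V₃} (G : SimpleGraph V) (v₁ : V₁) (v₂ : V₂) (v₃ : V₃)
      (h₁ : InDelta k G₁) (h₂ : InDelta k G₂) (h₃ : InDelta k G₃)
      (e : Nonempty (G ≃g deltaComp G₁ G₂ G₃ v₁ v₂ v₃)) : InDelta (k+1) G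

/-- `S` induces a nonempty connected subgraph with no cut vertices. -/
def IsBiconnectedSet {V : Type} (G : SimpleGraph V) (S : Set V) : Prop :=
  S.Nonempty ∧ (G.induce S).Preconnected ∧ ∀ x : V, (G.induce (S \ {x})).Preconnected

/-- A block: a maximal set inducing a connected subgraph with no cut vertices. -/
def IsBlock {V : Type} (G : SimpleGraph V) (S : Set V) : Prop :=
  IsBiconnectedSet G S ∧ ∀ T : Set V, S ⊆ T → IsBiconnectedSet G T → S = T

/-- A block graph: every block is a complete graph. -/
def IsBlockGraph {V : Type} (G : SimpleGraph V) : Prop :=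
  ∀ S : Set V, IsBlock G S → ∀ x ∈ S, ∀ y ∈ S, x ≠ y → G.Adj x y

/-- A vertex is simplicial if its neighborhood is a clique. -/
def IsSimplicial {V : Type} (G : SimpleGraph V) (v : V) : Prop :=
  ∀ x y : V, G.Adj v x → G.Adj v y → x ≠ y → G.Adj x y



open SimpleGraph Function

lemma reach_pred {W : Type*} {H : SimpleGraph W} (p : W → Prop)
    (hp : ∀ ⦃x y⦄, H.Adj x y → (p x ↔ p y)) {x y : W} (h : H.Reachable x y) : p x ↔ p y := by
  obtain ⟨w⟩ := h
  induction w with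
  | nil => rfl
  | cons a _ ih => exact (hp a).trans ih

noncomputable def induceIsoImage {V W : Type} {G : SimpleGraph V} {H : SimpleGraph W} (f : G ↪g H)
    (A : Set V) : G.induce A ≃g H.induce ((f : V → W) '' A) where
  toEquiv := Equiv.Set.image f A f.injective
  map_rel_iff' := @fun _ _ => f.map_rel_iff

lemma ncard_nbr {V W : Type} {G : SimpleGraph V} {H : SimpleGraph W} (e : G ≃g H) (v : V) :
    (H.neighborSet (e v)).ncard = (G.neighborSet v).ncard := by
  rw [← Nat.card_coe_set_eq, ← Nat.card_coe_set_eq]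
  exact Nat.card_congr (e.mapNeighborSet v).symm

lemma bicon_image {V W : Type} {G : SimpleGraph V} {H : SimpleGraph W} (f : G ↪g H)
    (A : Set V) : IsBiconnectedSet H ((f : V → W) '' A) ↔ IsBiconnectedSet G A := by
  have himg : ∀ b : V, (f : V → W) '' A \ {f b} = (f : V → W) '' (A \ {b}) := by
    intro b
    rw [Set.image_diff f.injective, Set.image_singleton]
  constructor
  · rintro ⟨h1, h2, h3⟩
    refine ⟨by simpa using h1, ((induceIsoImage f A).preconnected_iff).mpr h2, fun b => ?_⟩
    exact ((induceIsoImage f (A \ {b})).preconnected_iff).mpr (by rw [← himg b]; exact h3 (f b))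
  · rintro ⟨h1, h2, h3⟩
    refine ⟨by simpa using h1, ((induceIsoImage f A).preconnected_iff).mp h2, fun x => ?_⟩
    by_cases hx : x ∈ Set.range (f : V → W)
    · obtain ⟨b, rfl⟩ := hx
      rw [himg b]
      exact ((induceIsoImage f (A \ {b})).preconnected_iff).mp (h3 b)
    · rw [Set.diff_singleton_eq_self (fun hmem => hx (Set.image_subset_range _ _ hmem))]
      exact ((induceIsoImage f A).preconnected_iff).mp h2

lemma block_image_iso {V W : Type} {G : SimpleGraph V} {H : SimpleGraph W} (e : G ≃g H)
    (A : Set V) (h : IsBlock G A) : IsBlock H ((e : V → W) '' A) := by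
  obtain ⟨h1, h2⟩ := h
  have hbi : IsBiconnectedSet H ((e : V → W) '' A) := (bicon_image e.toEmbedding A).mpr h1
  refine ⟨hbi, fun T hsub hT => ?_⟩
  have hT' : IsBiconnectedSet G ((e.symm : W → V) '' T) := by
    have heq : ((e : V → W) '' ((e.symm : W → V) '' T)) = T := by
      rw [← Set.image_comp]; simp
    rw [← bicon_image e.toEmbedding]
    show IsBiconnectedSet H ((e : V → W) '' _)
    rw [heq]; exact hT
  have hsub' : A ⊆ (e.symm : W → V) '' T := by
    intro a ha
    exact ⟨e a, hsub ⟨a, ha, rfl⟩, by simp⟩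
  have := h2 _ hsub' hT'
  rw [this, ← Set.image_comp]; simp

lemma simplicial_iso {V W : Type} {G : SimpleGraph V} {H : SimpleGraph W} (e : G ≃g H)
    (w : W) (h : IsSimplicial H w) : IsSimplicial G (e.symm w) := by
  intro x y hx hy hne
  have hx' : H.Adj w (e x) := by
    have := e.map_adj_iff.mpr hx
    simpa using this
  have hy' : H.Adj w (e y) := by
    have := e.map_adj_iff.mpr hy
    simpa using this
  have := h _ _ hx' hy' (fun hc => hne (e.injective hc))
  exact e.map_adj_iff.mp this

lemma simplicial_iso' {V W : Type} {G : SimpleGraph V} {H : SimpleGraph W} (e : G ≃g H)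
    (v : V) (h : IsSimplicial G v) : IsSimplicial H (e v) := by
  have := simplicial_iso e.symm v h
  simpa using this

lemma pairwise_adj_preconnected {V : Type} {G : SimpleGraph V} {S : Set V}
    (h : ∀ x ∈ S, ∀ y ∈ S, x ≠ y → G.Adj x y) : (G.induce S).Preconnected := by
  rintro ⟨x, hx⟩ ⟨y, hy⟩
  by_cases hxy : x = y
  · subst hxy; rfl
  · exact SimpleGraph.Adj.reachable (G := G.induce S) (h x hx y hy hxy)

lemma sep_general {W U : Type} {H : SimpleGraph U} (j : W → U) (u₀ : U) (hu₀ : u₀ ∈ Set.range j)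
    (hcross : ∀ x y : U, H.Adj x y → x ∈ Set.range j → y ∉ Set.range j → x = u₀)
    {S : Set U} (hS : IsBiconnectedSet H S) : S ⊆ Set.range j ∨ S ∩ Set.range j ⊆ {u₀} := by
  by_cases hsub : S ⊆ Set.range j
  · exact Or.inl hsub
  · right
    obtain ⟨y, hyS, hyr⟩ := Set.not_subset.mp hsub
    rintro x ⟨hxS, hxr⟩
    by_contra hx0
    have hxm : x ∈ S \ {u₀} := ⟨hxS, hx0⟩
    have hym : y ∈ S \ {u₀} := ⟨hyS, fun hc => hyr (hc ▸ hu₀)⟩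
    have hreach := hS.2.2 u₀ ⟨x, hxm⟩ ⟨y, hym⟩
    have key := reach_pred (H := H.induce (S \ {u₀}))
      (p := fun z => (z : U) ∈ Set.range j) ?_ hreach
    · exact hyr (key.mp hxr)
    · rintro ⟨a, ha⟩ ⟨b, hb⟩ hadj
      constructor
      · intro hpa
        by_contra hpb
        exact ha.2 (hcross a b hadj hpa hpb)
      · intro hpb
        by_contra hpa
        exact hb.2 (hcross b a hadj.symm hpb hpa)

/-- The key invariant. -/
def Good {V : Type} (G : SimpleGraph V) : Prop :=
  (∀ v : V, Odd ((G.neighborSet v).ncard)) ∧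
    (∀ S : Set V, IsBlock G S →
      Nonempty (G.induce S ≃g (⊤ : SimpleGraph (Fin 2))) ∨
        Nonempty (G.induce S ≃g (⊤ : SimpleGraph (Fin 3)))) ∧
    (∀ v : V, IsSimplicial G v → ((G.neighborSet v).ncard) < 2)

lemma GoodIso {V W : Type} {G : SimpleGraph V} {H : SimpleGraph W} (e : G ≃g H)
    (g : Good G) : Good H := by
  obtain ⟨g1, g2, g3⟩ := g
  refine ⟨fun w => ?_, fun S hS => ?_, fun w hw => ?_⟩
  · have := ncard_nbr e (e.symm w)
    simp only [RelIso.apply_symm_apply] at this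
    rw [this]
    exact g1 _
  · have hblk : IsBlock G ((e.symm : W → V) '' S) := block_image_iso e.symm S hS
    have heq : ((e : V → W) '' ((e.symm : W → V) '' S)) = S := by
      rw [← Set.image_comp]; simp
    have hiso := induceIsoImage e.toEmbedding ((e.symm : W → V) '' S)
    rw [show ((e.toEmbedding : V → W) '' ((e.symm : W → V) '' S)) = S from heq] at hiso
    rcases g2 _ hblk with hf | hf
    · obtain ⟨f⟩ := hf
      exact Or.inl ⟨hiso.symm.trans f⟩
    · obtain ⟨f⟩ := hf
      exact Or.inr ⟨hiso.symm.trans f⟩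
  · have hs := simplicial_iso e w hw
    have := g3 _ hs
    have hn := ncard_nbr e (e.symm w)
    simp only [RelIso.apply_symm_apply] at hn
    omega

lemma nbr_top2 (v : Fin 2) : ((⊤ : SimpleGraph (Fin 2)).neighborSet v).ncard = 1 := by
  have : ((⊤ : SimpleGraph (Fin 2)).neighborSet v) = {v + 1} := by
    ext x
    fin_cases v <;> fin_cases x <;> simp
  rw [this, Set.ncard_singleton]

lemma good_top2 : Good (⊤ : SimpleGraph (Fin 2)) := by
  refine ⟨fun v => by rw [nbr_top2]; exact odd_one, fun S hS => ?_, fun v _ => by rw [nbr_top2]; omega⟩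
  have hSuniv : S = Set.univ := by
    apply hS.2
    · exact Set.subset_univ S
    · refine ⟨⟨0, trivial⟩, pairwise_adj_preconnected ?_, fun x => pairwise_adj_preconnected ?_⟩
      · intro x _ y _ hxy; exact hxy
      · intro x _ y _ hxy; exact hxy
  subst hSuniv
  exact Or.inl ⟨induceUnivIso _⟩

section Delta
variable {V₁ V₂ V₃ : Type} {G₁ : SimpleGraph V₁} {G₂ : SimpleGraph V₂} {G₃ : SimpleGraph V₃}
  {v₁ : V₁} {v₂ : V₂} {v₃ : V₃}

local notation "D" => deltaComp G₁ G₂ G₃ v₁ v₂ v₃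

def embInl : G₁ ↪g D where
  toFun := Sum.inl
  inj' := Sum.inl_injective
  map_rel_iff' := Iff.rfl

def embInm : G₂ ↪g D where
  toFun := fun b => Sum.inr (Sum.inl b)
  inj' := fun a b h => by simpa using h
  map_rel_iff' := Iff.rfl

def embInr : G₃ ↪g D where
  toFun := fun b => Sum.inr (Sum.inr b)
  inj' := fun a b h => by simpa using h
  map_rel_iff' := Iff.rfl

def cycIso : (D) ≃g deltaComp G₂ G₃ G₁ v₂ v₃ v₁ where
  toFun := fun x => match x with
    | .inl a => .inr (.inr a)
    | .inr (.inl b) => .inl b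
    | .inr (.inr c) => .inr (.inl c)
  invFun := fun x => match x with
    | .inl b => .inr (.inl b)
    | .inr (.inl c) => .inr (.inr c)
    | .inr (.inr a) => .inl a
  left_inv := by rintro (a|b|c) <;> rfl
  right_inv := by rintro (b|c|a) <;> rfl
  map_rel_iff' := by
    rintro (a|a|a) (b|b|b) <;> exact Iff.rfl

def cycIso2 : (D) ≃g deltaComp G₃ G₁ G₂ v₃ v₁ v₂ :=
  (cycIso : (D) ≃g deltaComp G₂ G₃ G₁ v₂ v₃ v₁).trans cycIso

lemma cross1 : ∀ x y : V₁ ⊕ V₂ ⊕ V₃, (D).Adj x y → x ∈ Set.range (Sum.inl : V₁ → _) →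
    y ∉ Set.range (Sum.inl : V₁ → _) → x = Sum.inl v₁ := by
  rintro _ (b|b|b) h ⟨a, rfl⟩ hy
  · exact absurd ⟨b, rfl⟩ hy
  · exact congrArg _ h.1
  · exact congrArg _ h.1

lemma nbr_inl (a : V₁) (ha : a ≠ v₁) :
    (D).neighborSet (Sum.inl a) = Sum.inl '' (G₁.neighborSet a) := by
  ext (b|b|b)
  · simp only [mem_neighborSet, Set.mem_image]
    constructor
    · exact fun h => ⟨b, h, rfl⟩
    · rintro ⟨c, hc, hcb⟩; obtain rfl : c = b := by simpa using hcb
      exact hc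
  · constructor
    · rintro ⟨h, -⟩; exact absurd h ha
    · rintro ⟨c, hc, hcb⟩; simp at hcb
  · constructor
    · rintro ⟨h, -⟩; exact absurd h ha
    · rintro ⟨c, hc, hcb⟩; simp at hcb

lemma nbr_v₁ :
    (D).neighborSet (Sum.inl v₁) =
      Sum.inl '' (G₁.neighborSet v₁) ∪ {Sum.inr (Sum.inl v₂), Sum.inr (Sum.inr v₃)} := by
  ext (b|b|b)
  · simp only [mem_neighborSet, Set.mem_union, Set.mem_image, Set.mem_insert_iff,
      Set.mem_singleton_iff]
    constructor
    · exact fun h => Or.inl ⟨b, h, rfl⟩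
    · rintro (⟨c, hc, hcb⟩|h|h)
      · obtain rfl : c = b := by simpa using hcb
        exact hc
      · simp at h
      · simp at h
  · simp only [mem_neighborSet, Set.mem_union, Set.mem_image, Set.mem_insert_iff,
      Set.mem_singleton_iff]
    constructor
    · rintro ⟨-, rfl⟩; simp
    · rintro (⟨c, hc, hcb⟩|h|h)
      · simp at hcb
      · obtain rfl : b = v₂ := by simpa using h
        exact ⟨rfl, rfl⟩
      · simp at h
  · simp only [mem_neighborSet, Set.mem_union, Set.mem_image, Set.mem_insert_iff,
      Set.mem_singleton_iff]
    constructor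
    · rintro ⟨-, rfl⟩; simp
    · rintro (⟨c, hc, hcb⟩|h|h)
      · simp at hcb
      · simp at h
      · obtain rfl : b = v₃ := by simpa using h
        exact ⟨rfl, rfl⟩

lemma odd1 [Finite V₁] (hodd : ∀ a : V₁, Odd ((G₁.neighborSet a).ncard)) (a : V₁) :
    Odd (((D).neighborSet (Sum.inl a)).ncard) := by
  by_cases ha : a = v₁
  · subst ha
    rw [nbr_v₁, Set.ncard_union_eq ?_ (Set.toFinite _) (Set.toFinite _),
      Set.ncard_image_of_injective _ Sum.inl_injective, Set.ncard_pair (by simp)]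
    · obtain ⟨m, hm⟩ := hodd a
      exact ⟨m + 1, by omega⟩
    · rw [Set.disjoint_left]
      rintro x ⟨c, hc, rfl⟩ hx
      simp at hx
  · rw [nbr_inl a ha, Set.ncard_image_of_injective _ Sum.inl_injective]
    exact hodd a


lemma simp1 [Finite V₁] (hodd : ∀ a : V₁, Odd ((G₁.neighborSet a).ncard))
    (hsimp : ∀ a : V₁, IsSimplicial G₁ a → (G₁.neighborSet a).ncard < 2) (a : V₁)
    (h : IsSimplicial (D) (Sum.inl a)) : (((D).neighborSet (Sum.inl a)).ncard) < 2 := by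
  by_cases ha : a = v₁
  · rw [ha] at h
    exfalso
    have hne : (G₁.neighborSet v₁).ncard ≠ 0 := by
      intro hc
      obtain ⟨m, hm⟩ := hodd v₁
      omega
    obtain ⟨x, hx⟩ := Set.nonempty_of_ncard_ne_zero hne
    have h1 : (D).Adj (Sum.inl v₁) (Sum.inl x) := hx
    have h2 : (D).Adj (Sum.inl v₁) (Sum.inr (Sum.inl v₂)) := ⟨rfl, rfl⟩
    have h3 := h _ _ h1 h2 (by simp)
    exact G₁.irrefl (h3.1 ▸ hx)
  · rw [nbr_inl a ha, Set.ncard_image_of_injective _ Sum.inl_injective]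
    apply hsimp a
    intro x y hx hy hne
    exact h (Sum.inl x) (Sum.inl y) hx hy (by simpa using hne)

lemma cross2 : ∀ x y : V₁ ⊕ V₂ ⊕ V₃, (D).Adj x y →
    x ∈ Set.range ((Sum.inr ∘ Sum.inl) : V₂ → _) →
    y ∉ Set.range ((Sum.inr ∘ Sum.inl) : V₂ → _) → x = Sum.inr (Sum.inl v₂) := by
  rintro _ (b|b|b) h ⟨a, rfl⟩ hy
  · rw [show a = v₂ from h.1]; rfl
  · exact absurd ⟨b, rfl⟩ hy
  · rw [show a = v₂ from h.1]; rfl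

lemma cross3 : ∀ x y : V₁ ⊕ V₂ ⊕ V₃, (D).Adj x y →
    x ∈ Set.range ((Sum.inr ∘ Sum.inr) : V₃ → _) →
    y ∉ Set.range ((Sum.inr ∘ Sum.inr) : V₃ → _) → x = Sum.inr (Sum.inr v₃) := by
  rintro _ (b|b|b) h ⟨a, rfl⟩ hy
  · rw [show a = v₃ from h.1]; rfl
  · rw [show a = v₃ from h.1]; rfl
  · exact absurd ⟨b, rfl⟩ hy

lemma bicon_parts {S : Set (V₁ ⊕ V₂ ⊕ V₃)} (hS : IsBiconnectedSet (D) S) :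
    S ⊆ Set.range (Sum.inl : V₁ → _) ∨ S ⊆ Set.range ((Sum.inr ∘ Sum.inl) : V₂ → _) ∨
      S ⊆ Set.range ((Sum.inr ∘ Sum.inr) : V₃ → _) ∨
      S ⊆ {Sum.inl v₁, Sum.inr (Sum.inl v₂), Sum.inr (Sum.inr v₃)} := by
  rcases sep_general Sum.inl (Sum.inl v₁) ⟨v₁, rfl⟩ cross1 hS with h1 | h1
  · exact Or.inl h1
  rcases sep_general (Sum.inr ∘ Sum.inl) (Sum.inr (Sum.inl v₂)) ⟨v₂, rfl⟩ cross2 hS with h2 | h2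
  · exact Or.inr (Or.inl h2)
  rcases sep_general (Sum.inr ∘ Sum.inr) (Sum.inr (Sum.inr v₃)) ⟨v₃, rfl⟩ cross3 hS with h3 | h3
  · exact Or.inr (Or.inr (Or.inl h3))
  refine Or.inr (Or.inr (Or.inr fun z hz => ?_))
  rcases z with a | b | c
  · exact Or.inl (h1 ⟨hz, ⟨a, rfl⟩⟩)
  · exact Or.inr (Or.inl (h2 ⟨hz, ⟨b, rfl⟩⟩))
  · exact Or.inr (Or.inr (h3 ⟨hz, ⟨c, rfl⟩⟩))

lemma T3_pairwise : ∀ x ∈ ({Sum.inl v₁, Sum.inr (Sum.inl v₂), Sum.inr (Sum.inr v₃)} :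
      Set (V₁ ⊕ V₂ ⊕ V₃)), ∀ y ∈ ({Sum.inl v₁, Sum.inr (Sum.inl v₂), Sum.inr (Sum.inr v₃)} :
      Set (V₁ ⊕ V₂ ⊕ V₃)), x ≠ y → (D).Adj x y := by
  rintro x (rfl | rfl | rfl) y (rfl | rfl | rfl) hne <;>
    first
      | exact absurd rfl hne
      | exact ⟨rfl, rfl⟩

noncomputable def eqvT3 :
    ({Sum.inl v₁, Sum.inr (Sum.inl v₂), Sum.inr (Sum.inr v₃)} : Set (V₁ ⊕ V₂ ⊕ V₃)) ≃ Fin 3 := by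
  apply (Equiv.ofBijective (α := Fin 3)
    (fun i => if i = 0 then ⟨Sum.inl v₁, by simp⟩ else if i = 1 then
      ⟨Sum.inr (Sum.inl v₂), by simp⟩ else ⟨Sum.inr (Sum.inr v₃), by simp⟩) ?_).symm
  constructor
  · intro i j hij
    fin_cases i <;> fin_cases j <;> simp_all
  · rintro ⟨z, (rfl | rfl | rfl)⟩
    · exact ⟨0, rfl⟩
    · exact ⟨1, rfl⟩
    · exact ⟨2, rfl⟩

noncomputable def isoT3 :
    (D).induce ({Sum.inl v₁, Sum.inr (Sum.inl v₂), Sum.inr (Sum.inr v₃)} :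
      Set (V₁ ⊕ V₂ ⊕ V₃)) ≃g (⊤ : SimpleGraph (Fin 3)) where
  toEquiv := eqvT3
  map_rel_iff' := by
    intro a b
    show eqvT3 a ≠ eqvT3 b ↔ (D).Adj a.1 b.1
    rw [eqvT3.injective.ne_iff]
    constructor
    · intro h
      exact T3_pairwise a.1 a.2 b.1 b.2 (fun hc => h (Subtype.ext hc))
    · intro h hc
      exact (D).irrefl (hc ▸ h)

lemma good_deltaComp [Finite V₁] [Finite V₂] [Finite V₃]
    (g₁ : Good G₁) (g₂ : Good G₂) (g₃ : Good G₃) : Good (D) := by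
  obtain ⟨g₁o, g₁b, g₁s⟩ := g₁
  obtain ⟨g₂o, g₂b, g₂s⟩ := g₂
  obtain ⟨g₃o, g₃b, g₃s⟩ := g₃
  refine ⟨?_, ?_, ?_⟩
  · rintro (a | b | c)
    · exact odd1 g₁o a
    · have h := ncard_nbr (cycIso : (D) ≃g deltaComp G₂ G₃ G₁ v₂ v₃ v₁) (Sum.inr (Sum.inl b))
      rw [← h]
      exact odd1 g₂o b
    · have h := ncard_nbr (cycIso2 : (D) ≃g deltaComp G₃ G₁ G₂ v₃ v₁ v₂) (Sum.inr (Sum.inr c))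
      rw [← h]
      exact odd1 g₃o c
  · rintro S ⟨hb, hmax⟩
    rcases bicon_parts hb with h | h | h | h
    · -- inside part 1
      set A : Set V₁ := Sum.inl ⁻¹' S with hA
      have hSA : ((embInl (G₁ := G₁) (G₂ := G₂) (G₃ := G₃) (v₁ := v₁) (v₂ := v₂) (v₃ := v₃) :
          V₁ → V₁ ⊕ V₂ ⊕ V₃)) '' A = S := Set.image_preimage_eq_of_subset h
      have hbA : IsBlock G₁ A := by
        constructor
        · rw [← bicon_image embInl A, hSA]
          exact hb
        · intro B hAB hBb
          have h1 : S ⊆ (embInl (G₁ := G₁) (G₂ := G₂) (G₃ := G₃) (v₁ := v₁) (v₂ := v₂)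
              (v₃ := v₃) : V₁ → _) '' B := by
            rw [← hSA]; exact Set.image_mono hAB
          have h3 := hmax _ h1 ((bicon_image embInl B).mpr hBb)
          apply Set.image_injective.mpr (Sum.inl_injective (α := V₁) (β := V₂ ⊕ V₃))
          show Sum.inl '' A = Sum.inl '' B
          rw [show (Sum.inl '' A : Set (V₁ ⊕ V₂ ⊕ V₃)) = _ from hSA, h3]
          rfl
      have hiso := induceIsoImage (embInl (G₁ := G₁) (G₂ := G₂) (G₃ := G₃) (v₁ := v₁)
        (v₂ := v₂) (v₃ := v₃)) A
      rw [hSA] at hiso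
      rcases g₁b A hbA with hf | hf <;> obtain ⟨f⟩ := hf
      · exact Or.inl ⟨hiso.symm.trans f⟩
      · exact Or.inr ⟨hiso.symm.trans f⟩
    · -- inside part 2
      set A : Set V₂ := (Sum.inr ∘ Sum.inl) ⁻¹' S with hA
      have hSA : ((embInm (G₁ := G₁) (G₂ := G₂) (G₃ := G₃) (v₁ := v₁) (v₂ := v₂) (v₃ := v₃) :
          V₂ → V₁ ⊕ V₂ ⊕ V₃)) '' A = S := Set.image_preimage_eq_of_subset h
      have hbA : IsBlock G₂ A := by
        constructor
        · rw [← bicon_image embInm A, hSA]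
          exact hb
        · intro B hAB hBb
          have h1 : S ⊆ (embInm (G₁ := G₁) (G₂ := G₂) (G₃ := G₃) (v₁ := v₁) (v₂ := v₂)
              (v₃ := v₃) : V₂ → _) '' B := by
            rw [← hSA]; exact Set.image_mono hAB
          have h3 := hmax _ h1 ((bicon_image embInm B).mpr hBb)
          apply Set.image_injective.mpr
            (embInm (G₁ := G₁) (G₂ := G₂) (G₃ := G₃) (v₁ := v₁) (v₂ := v₂) (v₃ := v₃)).injective
          rw [hSA, h3]
      have hiso := induceIsoImage (embInm (G₁ := G₁) (G₂ := G₂) (G₃ := G₃) (v₁ := v₁)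
        (v₂ := v₂) (v₃ := v₃)) A
      rw [hSA] at hiso
      rcases g₂b A hbA with hf | hf <;> obtain ⟨f⟩ := hf
      · exact Or.inl ⟨hiso.symm.trans f⟩
      · exact Or.inr ⟨hiso.symm.trans f⟩
    · -- inside part 3
      set A : Set V₃ := (Sum.inr ∘ Sum.inr) ⁻¹' S with hA
      have hSA : ((embInr (G₁ := G₁) (G₂ := G₂) (G₃ := G₃) (v₁ := v₁) (v₂ := v₂) (v₃ := v₃) :
          V₃ → V₁ ⊕ V₂ ⊕ V₃)) '' A = S := Set.image_preimage_eq_of_subset h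
      have hbA : IsBlock G₃ A := by
        constructor
        · rw [← bicon_image embInr A, hSA]
          exact hb
        · intro B hAB hBb
          have h1 : S ⊆ (embInr (G₁ := G₁) (G₂ := G₂) (G₃ := G₃) (v₁ := v₁) (v₂ := v₂)
              (v₃ := v₃) : V₃ → _) '' B := by
            rw [← hSA]; exact Set.image_mono hAB
          have h3 := hmax _ h1 ((bicon_image embInr B).mpr hBb)
          apply Set.image_injective.mpr
            (embInr (G₁ := G₁) (G₂ := G₂) (G₃ := G₃) (v₁ := v₁) (v₂ := v₂) (v₃ := v₃)).injective
          rw [hSA, h3]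
      have hiso := induceIsoImage (embInr (G₁ := G₁) (G₂ := G₂) (G₃ := G₃) (v₁ := v₁)
        (v₂ := v₂) (v₃ := v₃)) A
      rw [hSA] at hiso
      rcases g₃b A hbA with hf | hf <;> obtain ⟨f⟩ := hf
      · exact Or.inl ⟨hiso.symm.trans f⟩
      · exact Or.inr ⟨hiso.symm.trans f⟩
    · -- the triangle
      have hbT : IsBiconnectedSet (D)
          ({Sum.inl v₁, Sum.inr (Sum.inl v₂), Sum.inr (Sum.inr v₃)} : Set (V₁ ⊕ V₂ ⊕ V₃)) := by
        refine ⟨⟨Sum.inl v₁, by simp⟩, pairwise_adj_preconnected T3_pairwise,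
          fun x => pairwise_adj_preconnected ?_⟩
        intro a ha b hbb hne
        exact T3_pairwise a ha.1 b hbb.1 hne
      have hST := hmax _ h hbT
      right
      rw [hST]
      exact ⟨isoT3⟩
  · rintro (a | b | c) hsimp
    · exact simp1 g₁o g₁s a hsimp
    · have h2 : IsSimplicial (deltaComp G₂ G₃ G₁ v₂ v₃ v₁) (Sum.inl b) :=
        simplicial_iso' (cycIso : (D) ≃g deltaComp G₂ G₃ G₁ v₂ v₃ v₁) (Sum.inr (Sum.inl b)) hsimp
      have := simp1 g₂o g₂s b h2
      have hn := ncard_nbr (cycIso : (D) ≃g deltaComp G₂ G₃ G₁ v₂ v₃ v₁) (Sum.inr (Sum.inl b))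
      rw [← hn]
      exact this
    · have h2 : IsSimplicial (deltaComp G₃ G₁ G₂ v₃ v₁ v₂) (Sum.inl c) :=
        simplicial_iso' (cycIso2 : (D) ≃g deltaComp G₃ G₁ G₂ v₃ v₁ v₂) (Sum.inr (Sum.inr c)) hsimp
      have := simp1 g₃o g₃s c h2
      have hn := ncard_nbr (cycIso2 : (D) ≃g deltaComp G₃ G₁ G₂ v₃ v₁ v₂) (Sum.inr (Sum.inr c))
      rw [← hn]
      exact this

end Delta

lemma finite_of_inDelta {k : ℕ} {V : Type} {G : SimpleGraph V} (hG : InDelta k G) : Finite V := by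
  induction hG with
  | base G e =>
    obtain ⟨f⟩ := e
    exact Finite.of_equiv _ f.toEquiv.symm
  | comp G v₁ v₂ v₃ h₁ h₂ h₃ e ih₁ ih₂ ih₃ =>
    obtain ⟨f⟩ := e
    have := ih₁
    have := ih₂
    have := ih₃
    exact Finite.of_equiv _ f.toEquiv.symm

lemma good_of_inDelta {k : ℕ} {V : Type} {G : SimpleGraph V} (hG : InDelta k G) : Good G := by
  induction hG with
  | base G e => exact GoodIso e.some.symm good_top2
  | comp G v₁ v₂ v₃ h₁ h₂ h₃ e ih₁ ih₂ ih₃ =>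
    obtain ⟨f⟩ := e
    have := finite_of_inDelta h₁
    have := finite_of_inDelta h₂
    have := finite_of_inDelta h₃
    exact GoodIso f.symm (good_deltaComp ih₁ ih₂ ih₃)

theorem delta_blockGraph {V : Type} [Fintype V] [DecidableEq V]
    (k : ℕ) (G : SimpleGraph V) [DecidableRel G.Adj] (hG : InDelta k G) :
    IsBlockGraph G ∧
      (∀ v : V, Odd (G.degree v)) ∧
      (∀ S : Set V, IsBlock G S →
        Nonempty (G.induce S ≃g (⊤ : SimpleGraph (Fin 2))) ∨
        Nonempty (G.induce S ≃g (⊤ : SimpleGraph (Fin 3)))) ∧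
      (∀ v : V, IsSimplicial G v → G.degree v < 2) := by
  obtain ⟨hodd, hblk, hsimp⟩ := good_of_inDelta hG
  have hdeg : ∀ v : V, G.degree v = (G.neighborSet v).ncard := by
    intro v
    rw [Set.ncard_eq_toFinset_card']
    rfl
  refine ⟨?_, fun v => (hdeg v) ▸ hodd v, hblk, fun v hv => (hdeg v) ▸ hsimp v hv⟩
  intro S hS x hx y hy hxy
  have hne : ∀ {n : ℕ} (f : G.induce S ≃g (⊤ : SimpleGraph (Fin n))),
      f ⟨x, hx⟩ ≠ f ⟨y, hy⟩ := by
    intro n f hc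
    exact hxy (Subtype.ext_iff.mp (f.injective hc))
  rcases hblk S hS with hf | hf <;> obtain ⟨f⟩ := hf
  · exact f.map_rel_iff.mp (hne f)
  · exact f.map_rel_iff.mp (hne f)
end
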